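/- For every z > 0 and every t > 0, the convolution identity ∫_0^t g₋(x; z) · g₊(t - x; 0) dx = g₊(t; z) holds; i.e., the sum of an independent generalized inverse Gaussian random variable with parameters (1, z², -1/2) and a chi-square random variable with one degree of freedom has generalized inverse Gaussian distribution with parameters (1, z², +1/2). -/

import Mathlib

/-- The generalized inverse Gaussian density with parameters `(ψ, χ, λ) = (1, z², -1/2)`:
`g₋(x; z) = (z e^z / √(2π)) x^{-3/2} exp(-z²/(2x) - x/2)`. -/
noncomputable def gigMinus (z x : ℝ) : ℝ :=
  z * Real.exp z / Real.sqrt (2 * Real.pi) * x ^ (-(3 : ℝ) / 2) *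
    Real.exp (-z ^ 2 / (2 * x) - x / 2)

/-- The generalized inverse Gaussian density with parameters `(ψ, χ, λ) = (1, z², +1/2)`:
`g₊(x; z) = (e^z / √(2π)) x^{-1/2} exp(-z²/(2x) - x/2)`.  At `z = 0` this is the chi-square
density with one degree of freedom. -/
noncomputable def gigPlus (z x : ℝ) : ℝ :=
  Real.exp z / Real.sqrt (2 * Real.pi) * x ^ (-(1 : ℝ) / 2) *
    Real.exp (-z ^ 2 / (2 * x) - x / 2)

lemma hpow32 (a : ℝ) (ha : 0 < a) : a ^ (-(3:ℝ)/2) = (a * Real.sqrt a)⁻¹ := by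
  rw [show (-(3:ℝ)/2) = -(3/2) by norm_num, Real.rpow_neg ha.le]
  congr 1
  rw [show (3:ℝ)/2 = 1 + 1/2 by norm_num, Real.rpow_add ha, Real.rpow_one,
    ← Real.sqrt_eq_rpow]

lemma hpow12 (a : ℝ) (ha : 0 < a) : a ^ (-(1:ℝ)/2) = (Real.sqrt a)⁻¹ := by
  rw [show (-(1:ℝ)/2) = -(1/2) by norm_num, Real.rpow_neg ha.le, ← Real.sqrt_eq_rpow]

theorem stmt_3 (z t : ℝ) (hz : 0 < z) (ht : 0 < t) :
    ∫ x in (0 : ℝ)..t, gigMinus z x * gigPlus 0 (t - x) = gigPlus z t := by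
  have hπ : 0 < Real.pi := Real.pi_pos
  set φ : ℝ → ℝ := fun u => z^2 * t / (z^2 + t * u^2) with hφ
  set ψ : ℝ → ℝ := fun u => -(2 * z^2 * t^2 * u) / (z^2 + t * u^2)^2 with hψ
  have hD : ∀ u : ℝ, 0 < z^2 + t * u^2 := fun u => by positivity
  have hderiv : ∀ u : ℝ, HasDerivAt φ (ψ u) u := by
    intro u
    have h2 := (hasDerivAt_const u (z^2 * t)).div
      (((hasDerivAt_pow 2 u).const_mul t).const_add (z^2)) (hD u).ne'
    simp only [hφ, hψ]
    refine h2.congr_deriv ?_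
    field_simp
    ring
  have hinj : Set.InjOn φ (Set.Ioi 0) := by
    intro a ha b hb hab
    simp only [hφ, Set.mem_Ioi] at *
    rw [div_eq_div_iff (hD a).ne' (hD b).ne'] at hab
    have h1' : z^2 + t * b^2 = z^2 + t * a^2 :=
      mul_left_cancel₀ (show z^2 * t ≠ 0 by positivity) hab
    have hab2 : a^2 = b^2 := mul_left_cancel₀ ht.ne' (by linarith)
    have h3 : (a - b) * (a + b) = 0 := by linear_combination hab2
    rcases mul_eq_zero.mp h3 with h | h
    · linarith
    · linarith
  have himg : φ '' Set.Ioi 0 = Set.Ioo 0 t := by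
    ext x
    simp only [Set.mem_image, Set.mem_Ioi, Set.mem_Ioo]
    constructor
    · rintro ⟨u, hu, rfl⟩
      refine ⟨by positivity, ?_⟩
      simp only [hφ]
      rw [div_lt_iff₀ (hD u)]
      nlinarith [mul_pos (mul_pos ht ht) (mul_pos hu hu)]
    · rintro ⟨hx0, hxt⟩
      have htx : 0 < t - x := by linarith
      refine ⟨Real.sqrt (z^2 * (t - x) / (t * x)), Real.sqrt_pos.mpr (by positivity), ?_⟩
      simp only [hφ]
      rw [Real.sq_sqrt (by positivity)]
      field_simp
      ring
  have key : ∀ u ∈ Set.Ioi (0:ℝ),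
      |ψ u| • (gigMinus z (φ u) * gigPlus 0 (t - φ u))
      = (Real.exp z * Real.exp (-z^2/(2*t) - t/2) / (Real.pi * Real.sqrt t))
          * Real.exp (-(1/2 : ℝ) * u^2) := by
    intro u hu
    rw [Set.mem_Ioi] at hu
    have hD0 : 0 < z^2 + t * u^2 := hD u
    set D := z^2 + t * u^2 with hDdef
    have hx0 : 0 < φ u := by simp only [hφ]; positivity
    have hxval : φ u = z^2 * t / D := rfl
    have htxv : t - φ u = t^2 * u^2 / D := by
      rw [hxval]; field_simp; ring
    have htx0 : 0 < t - φ u := by rw [htxv]; positivity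
    set S := Real.sqrt D with hSdef
    set T := Real.sqrt t with hTdef
    set P := Real.sqrt (2 * Real.pi) with hPdef
    have hS0 : 0 < S := Real.sqrt_pos.mpr hD0
    have hT0 : 0 < T := Real.sqrt_pos.mpr ht
    have hP0 : 0 < P := Real.sqrt_pos.mpr (by positivity)
    have hSS : S * S = D := Real.mul_self_sqrt hD0.le
    have hTT : T * T = t := Real.mul_self_sqrt ht.le
    have hPP : P * P = 2 * Real.pi := Real.mul_self_sqrt (by positivity)
    have habs : |ψ u| = 2 * z^2 * t^2 * u / D^2 := by
      simp only [hψ]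
      rw [abs_div, abs_neg, abs_of_pos (by positivity), abs_of_pos (by positivity)]
    have hsqx : Real.sqrt (φ u) = z * T / S := by
      rw [hxval, Real.sqrt_div (by positivity), Real.sqrt_mul (sq_nonneg z),
        Real.sqrt_sq hz.le, hSdef, hTdef]
    have e32 : (φ u) ^ (-(3:ℝ)/2) = D * S / (z^3 * t * T) := by
      rw [hpow32 _ hx0, hsqx, hxval, ← hSS, ← hTT]
      field_simp
    have e12 : (t - φ u) ^ (-(1:ℝ)/2) = S / (t * u) := by
      rw [hpow12 _ htx0, htxv, Real.sqrt_div (by positivity),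
        show t^2 * u^2 = (t * u)^2 by ring, Real.sqrt_sq (by positivity), inv_div, hSdef]
    have hexp : Real.exp (-z^2/(2 * φ u) - φ u/2) *
        Real.exp (-(0:ℝ)^2/(2 * (t - φ u)) - (t - φ u)/2)
        = Real.exp (-z^2/(2*t) - t/2) * Real.exp (-(1/2 : ℝ) * u^2) := by
      rw [← Real.exp_add, ← Real.exp_add]
      congr 1
      rw [hxval, htxv, hDdef]
      field_simp
      ring
    have hc : 2 * z^2 * t^2 * u / D^2 * (z * Real.exp z / P) * (D * S / (z^3 * t * T)) *
        (1 / P) * (S / (t * u)) = Real.exp z / (Real.pi * T) := by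
      rw [← hSS, ← hTT, show Real.pi = P * P / 2 by linarith [hPP]]
      field_simp
    simp only [gigMinus, gigPlus, smul_eq_mul, Real.exp_zero]
    rw [habs, e32, e12]
    linear_combination (Real.exp (-z^2/(2 * φ u) - φ u/2) *
        Real.exp (-(0:ℝ)^2/(2 * (t - φ u)) - (t - φ u)/2)) * hc
      + (Real.exp z / (Real.pi * T)) * hexp
  rw [intervalIntegral.integral_of_le ht.le, MeasureTheory.integral_Ioc_eq_integral_Ioo,
    ← himg,
    MeasureTheory.integral_image_eq_integral_abs_deriv_smul measurableSet_Ioi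
      (fun u _ => (hderiv u).hasDerivWithinAt) hinj,
    MeasureTheory.setIntegral_congr_fun measurableSet_Ioi key,
    MeasureTheory.integral_const_mul, integral_gaussian_Ioi,
    show Real.pi / (1/2) = 2 * Real.pi by ring]
  rw [gigPlus, hpow12 t ht]
  have hPP : Real.sqrt (2 * Real.pi) * Real.sqrt (2 * Real.pi) = 2 * Real.pi :=
    Real.mul_self_sqrt (by positivity)
  have hT0 : 0 < Real.sqrt t := Real.sqrt_pos.mpr ht
  have hP0 : 0 < Real.sqrt (2 * Real.pi) := Real.sqrt_pos.mpr (by positivity)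
  rw [show Real.pi = Real.sqrt (2 * Real.pi) * Real.sqrt (2 * Real.pi) / 2 by linarith]
  field_simp
  rw [Real.sq_sqrt (by positivity)]
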